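/- Fix τ' < τ, set S' = Ψ_F(S(τ')), choose t_n ∈ I(p_n/q_n), and define G_n(z) = F_{t_n}^{∘q_n}(z) − z − p_n. If n is large enough, then for all k ≤ q_n the iterate F_{t_n}^{∘k} is defined on S' with values in HS(F), and the sequence of maps (G_n) converges uniformly to 0 on S'. -/

import Mathlib

open Filter Real Set Topology

/-- The open horizontal strip `S(τ) = {z ∈ ℂ : |Im z| < τ}`. -/
def Strip (τ : ℝ) : Set ℂ := {z : ℂ | |z.im| < τ}

lemma not_eventually_const_aux {f : ℂ → ℂ} {U : Set ℂ} (hi : Set.InjOn f U) {z₀ : ℂ}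
    (hU : U ∈ 𝓝 z₀) (h : ∀ᶠ z in 𝓝 z₀, f z = f z₀) : False := by
  obtain ⟨ε, hε, hball⟩ := Metric.mem_nhds_iff.1 (Filter.inter_mem hU h)
  have h1 : z₀ + (ε/2 : ℝ) ∈ Metric.ball z₀ ε := by
    simp only [Metric.mem_ball, dist_eq_norm, add_sub_cancel_left, Complex.norm_real,
      Real.norm_eq_abs]
    rw [abs_of_pos (by linarith)]; linarith
  have h2 := hball h1
  have h0 := hball (Metric.mem_ball_self hε)
  have heq : z₀ + ((ε/2 : ℝ) : ℂ) = z₀ := hi h2.1 h0.1 (h2.2.trans h0.2.symm)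
  have : ((ε/2 : ℝ) : ℂ) = 0 := by linear_combination heq
  simp at this
  linarith

/-- An injective holomorphic function on an open set has nonvanishing derivative. -/
lemma deriv_ne_zero_of_injOn_aux {f : ℂ → ℂ} {U : Set ℂ} (hU : IsOpen U)
    (hd : DifferentiableOn ℂ f U) (hi : Set.InjOn f U) {z₀ : ℂ} (hz : z₀ ∈ U) :
    deriv f z₀ ≠ 0 := by
  have hUn : U ∈ 𝓝 z₀ := hU.mem_nhds hz
  have hA : AnalyticAt ℂ f z₀ := (hd.analyticOnNhd hU) z₀ hz
  have hF : AnalyticAt ℂ (fun z => f z - f z₀) z₀ := hA.sub analyticAt_const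
  intro hder
  have horder_ne_top : analyticOrderAt (fun z => f z - f z₀) z₀ ≠ ⊤ := by
    intro htop
    have h1 := analyticOrderAt_eq_top.1 htop
    exact not_eventually_const_aux hi hUn
      (by filter_upwards [h1] with z hz1 using sub_eq_zero.1 hz1)
  lift analyticOrderAt (fun z => f z - f z₀) z₀ to ℕ using horder_ne_top with d hd'
  obtain ⟨g, hg_an, hg0, hfg⟩ := (hF.analyticOrderAt_eq_natCast (n := d)).1 hd'.symm
  have hd0 : d ≠ 0 := by
    intro h0
    subst h0
    have := hfg.self_of_nhds
    simp at this
    exact hg0 this.symm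
  have hdc : (d : ℂ) ≠ 0 := Nat.cast_ne_zero.2 hd0
  have hd1 : d ≠ 1 := by
    intro h1
    subst h1
    have e1 : deriv (fun z => f z - f z₀) z₀ = 0 := by
      rw [deriv_sub_const]; exact hder
    have hEq : (fun z => f z - f z₀) =ᶠ[𝓝 z₀] (fun z => (z - z₀) ^ 1 • g z) := hfg
    have e2 : deriv (fun z : ℂ => (z - z₀) ^ 1 • g z) z₀ = g z₀ := by
      have h1 : HasDerivAt (fun z : ℂ => z - z₀) 1 z₀ := (hasDerivAt_id z₀).sub_const z₀
      have h2 : HasDerivAt g (deriv g z₀) z₀ := hg_an.differentiableAt.hasDerivAt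
      have h3 : HasDerivAt (fun z : ℂ => (z - z₀) * g z)
          (1 * g z₀ + (z₀ - z₀) * deriv g z₀) z₀ := h1.mul h2
      have h4 := h3.deriv
      simpa [smul_eq_mul] using h4
    rw [hEq.deriv_eq, e2] at e1
    exact hg0 e1
  have hd2 : 2 ≤ d := by omega
  set c := g z₀ with hc_def
  have hc : c ≠ 0 := hg0
  set h : ℂ → ℂ := fun z => Complex.exp (Complex.log (g z * c⁻¹) / d + Complex.log c / d) with hh
  have hgc_an : AnalyticAt ℂ (fun z => g z * c⁻¹) z₀ := hg_an.mul analyticAt_const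
  have hgc1 : g z₀ * c⁻¹ = 1 := mul_inv_cancel₀ hc
  have hone : (1 : ℂ) ∈ Complex.slitPlane := by
    simp [Complex.mem_slitPlane_iff]
  have hh_an : AnalyticAt ℂ h z₀ := by
    apply AnalyticAt.cexp
    apply AnalyticAt.add _ analyticAt_const
    exact (hgc_an.clog (by rw [hgc1]; exact hone)).div analyticAt_const hdc
  have hg_ne : ∀ᶠ z in 𝓝 z₀, g z ≠ 0 := hg_an.continuousAt.eventually_ne hg0
  have hpow : ∀ᶠ z in 𝓝 z₀, h z ^ d = g z := by
    filter_upwards [hg_ne] with z hgz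
    rw [hh]
    simp only
    rw [← Complex.exp_nat_mul]
    have e : (d : ℂ) * (Complex.log (g z * c⁻¹) / d + Complex.log c / d)
        = Complex.log (g z * c⁻¹) + Complex.log c := by field_simp
    rw [e, Complex.exp_add, Complex.exp_log (by simp [hgz, hc]), Complex.exp_log hc]
    field_simp
  set φ : ℂ → ℂ := fun z => (z - z₀) * h z with hφ
  have hφ_an : AnalyticAt ℂ φ z₀ := (analyticAt_id.sub analyticAt_const).mul hh_an
  have hfgφ : ∀ᶠ z in 𝓝 z₀, f z - f z₀ = φ z ^ d := by
    filter_upwards [hfg, hpow] with z h1 h2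
    rw [h1, hφ]
    simp only [smul_eq_mul, mul_pow, h2]
  have hφ0 : φ z₀ = 0 := by simp [hφ]
  rcases hφ_an.eventually_constant_or_nhds_le_map_nhds with hconst | hmap
  · refine not_eventually_const_aux hi hUn ?_
    filter_upwards [hconst, hfgφ] with z h1 h2
    rw [h1, hφ0] at h2
    rw [zero_pow hd0] at h2
    exact sub_eq_zero.1 h2
  · rw [hφ0] at hmap
    have hV : ({z | f z - f z₀ = φ z ^ d} ∩ U) ∈ 𝓝 z₀ := Filter.inter_mem hfgφ hUn
    have himg : φ '' ({z | f z - f z₀ = φ z ^ d} ∩ U) ∈ 𝓝 (0 : ℂ) := by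
      apply hmap
      rw [Filter.mem_map]
      exact Filter.mem_of_superset hV (Set.subset_preimage_image _ _)
    obtain ⟨ρ, hρ, hball⟩ := Metric.mem_nhds_iff.1 himg
    set ζ : ℂ := Complex.exp ((2 * Real.pi / d : ℝ) * Complex.I) with hζ
    have hcast : ((2 * Real.pi / d : ℝ) : ℂ) = 2 * Real.pi / d := by push_cast; ring
    have hζd : ζ ^ d = 1 := by
      rw [hζ, ← Complex.exp_nat_mul, hcast]
      have e : (d : ℂ) * (2 * Real.pi / d * Complex.I) = 2 * Real.pi * Complex.I := by
        field_simp
      rw [e, Complex.exp_two_pi_mul_I]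
    have hζ1 : ζ ≠ 1 := by
      rw [hζ]
      intro heq
      obtain ⟨n, hn⟩ := Complex.exp_eq_one_iff.1 heq
      rw [hcast] at hn
      have hpiI : ((2 : ℂ) * Real.pi * Complex.I) ≠ 0 := by
        simp [Real.pi_ne_zero, Complex.I_ne_zero]
      have h2 : (n : ℂ) * d = 1 := by
        rw [div_mul_eq_mul_div, div_eq_iff hdc] at hn
        have key : (1 - (n : ℂ) * d) * (2 * (Real.pi : ℂ) * Complex.I) = 0 := by
          linear_combination hn
        rcases mul_eq_zero.1 key with h' | h'
        · linear_combination -h'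
        · exact absurd h' hpiI
      have h3 : (n * (d : ℤ) : ℤ) = 1 := by exact_mod_cast h2
      have hd2' : (2 : ℤ) ≤ (d : ℤ) := by exact_mod_cast hd2
      rcases le_or_gt n 0 with hn0 | hn0
      · nlinarith
      · nlinarith
    have hζabs : ‖ζ‖ = 1 := by
      rw [hζ, Complex.norm_exp_ofReal_mul_I]
    set v : ℂ := ((ρ / 2 : ℝ) : ℂ) with hv
    have hv0 : v ≠ 0 := Complex.ofReal_ne_zero.2 (by positivity)
    have hvnorm : ‖v‖ = ρ / 2 := by
      rw [hv, Complex.norm_real, Real.norm_eq_abs, abs_of_pos (by linarith)]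
    have hv_mem : v ∈ Metric.ball (0 : ℂ) ρ := by
      rw [Metric.mem_ball, dist_zero_right, hvnorm]; linarith
    have hζv_mem : ζ * v ∈ Metric.ball (0 : ℂ) ρ := by
      rw [Metric.mem_ball, dist_zero_right, norm_mul]
      have : ‖ζ‖ = 1 := hζabs
      rw [this, one_mul, hvnorm]; linarith
    obtain ⟨z₁, hz₁, hφz₁⟩ := hball hv_mem
    obtain ⟨z₂, hz₂, hφz₂⟩ := hball hζv_mem
    have hfz : f z₁ = f z₂ := by
      have e1 : f z₁ - f z₀ = v ^ d := by rw [hz₁.1.out, hφz₁]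
      have e2 : f z₂ - f z₀ = v ^ d := by
        rw [hz₂.1.out, hφz₂, mul_pow, hζd, one_mul]
      linear_combination e1 - e2
    have hz12 : z₁ = z₂ := hi hz₁.2 hz₂.2 hfz
    rw [hz12, hφz₂] at hφz₁
    have : (ζ - 1) * v = 0 := by linear_combination hφz₁
    rcases mul_eq_zero.1 this with h' | h'
    · exact hζ1 (by linear_combination h')
    · exact hv0 h'


set_option maxHeartbeats 1000000 in
theorem iterates_defined_on_substrip_and_Gn_tendsto_zero
    (F : ℝ → ℝ)
    (hFanal : ∀ x : ℝ, AnalyticAt ℝ F x)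
    (hFmono : StrictMono F)
    (hFbij : Function.Bijective F)
    (hFderiv : ∀ x : ℝ, 0 < deriv F x)
    (hFper : ∀ x : ℝ, F (x + 1) = F x + 1)
    -- translation numbers of the translated family `F_t = F + t`
    (T : ℝ → ℝ)
    (hT : ∀ t x : ℝ, Tendsto (fun n : ℕ => ((fun y => F y + t)^[n] x - x) / n)
      atTop (𝓝 (T t)))
    (θ : ℝ) (hθ : T 0 = θ) (hirr : Irrational θ)
    -- Herman strip of modulus `2τ`
    (τ : ℝ) (hτ : 0 < τ)
    (Φ : ℝ → ℝ) (hΦmono : StrictMono Φ)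
    (hΦper : ∀ x : ℝ, Φ (x + 1) = Φ x + 1)
    (hΦconj : ∀ x : ℝ, Φ (F x) = Φ x + θ)
    (Ψ : ℂ → ℂ)
    (hΨΦ : ∀ x : ℝ, Ψ ((Φ x : ℝ) : ℂ) = (x : ℂ))
    (hΨdiff : DifferentiableOn ℂ Ψ (Strip τ))
    (hΨinj : Set.InjOn Ψ (Strip τ))
    (hΨper : ∀ z ∈ Strip τ, Ψ (z + 1) = Ψ z + 1)
    (Fc : ℂ → ℂ)
    (hFcreal : ∀ x : ℝ, Fc (x : ℂ) = ((F x : ℝ) : ℂ))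
    (hFcdiff : DifferentiableOn ℂ Fc (Ψ '' Strip τ))
    (hFcper : ∀ z ∈ Ψ '' Strip τ, Fc (z + 1) = Fc z + 1)
    (hFclin : ∀ z ∈ Strip τ, Fc (Ψ z) = Ψ (z + (θ : ℂ)))
    -- `0 < τ' < τ`
    (τ' : ℝ) (hτ'pos : 0 < τ') (hτ'τ : τ' < τ)
    -- continued fraction convergents `p_n/q_n` of `θ`
    (pn : ℕ → ℤ) (qn : ℕ → ℕ)
    (hqpos : ∀ n, 0 < qn n)
    (hqtend : Tendsto qn atTop atTop)
    (hcop : ∀ n, Nat.Coprime (pn n).natAbs (qn n))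
    (hconv : ∀ n, |θ - (pn n : ℝ) / (qn n : ℝ)| ≤ 1 / (qn n : ℝ) ^ 2)
    -- parameters `t_n ∈ I(p_n/q_n)`, with the bound coming from Herman's theorem
    (t : ℕ → ℝ) (ht : ∀ n, T (t n) = (pn n : ℝ) / (qn n : ℝ))
    (C₃ : ℝ) (hC₃ : 0 < C₃)
    (htbound : ∀ n, |t n| ≤ C₃ * |θ - (pn n : ℝ) / (qn n : ℝ)|) :
    (∃ N : ℕ, ∀ n ≥ N, ∀ k ≤ qn n,
      Set.MapsTo ((fun z : ℂ => Fc z + ((t n : ℝ) : ℂ))^[k])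
        (Ψ '' Strip τ') (Ψ '' Strip τ))
    ∧ TendstoUniformlyOn
        (fun n z => (fun z : ℂ => Fc z + ((t n : ℝ) : ℂ))^[qn n] z - z - ((pn n : ℤ) : ℂ))
        (fun _ => 0) atTop (Ψ '' Strip τ') := by
  classical
  -- ### Basic facts about strips
  have hopen : IsOpen (Strip τ) := by
    have h : Strip τ = (fun z : ℂ => |z.im|) ⁻¹' (Set.Iio τ) := rfl
    rw [h]
    exact isOpen_Iio.preimage (continuous_abs.comp Complex.continuous_im)
  have hΨcont : ContinuousOn Ψ (Strip τ) := hΨdiff.continuousOn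
  have hΨan : AnalyticOnNhd ℂ Ψ (Strip τ) := hΨdiff.analyticOnNhd hopen
  have hΨdAt : ∀ z ∈ Strip τ, DifferentiableAt ℂ Ψ z := fun z hz => (hΨan z hz).differentiableAt
  have hderiv_an : AnalyticOnNhd ℂ (deriv Ψ) (Strip τ) := hΨan.deriv
  have hderiv_cont : ContinuousOn (deriv Ψ) (Strip τ) := hderiv_an.continuousOn
  have him_add_real : ∀ (z : ℂ) (r : ℝ), (z + (r : ℂ)).im = z.im := by intro z r; simp
  have hmem_add_real : ∀ {z : ℂ} {a : ℝ}, z ∈ Strip a → ∀ (r : ℝ), z + (r : ℂ) ∈ Strip a := by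
    intro z a hz r
    show |(z + (r : ℂ)).im| < a
    rw [him_add_real z r]
    exact hz
  have hmem_add_int : ∀ {z : ℂ} {a : ℝ}, z ∈ Strip a → ∀ (k : ℤ), z + (k : ℂ) ∈ Strip a := by
    intro z a hz k
    have := hmem_add_real hz (k : ℝ)
    simpa using this
  -- ### Integer periodicity of Ψ
  have hΨint : ∀ (k : ℤ), ∀ z ∈ Strip τ, Ψ (z + (k : ℂ)) = Ψ z + (k : ℂ) := by
    intro k
    induction k using Int.induction_on with
    | zero => intro z hz; simp
    | succ n ih =>
      intro z hz
      have hmem : z + ((n : ℤ) : ℂ) ∈ Strip τ := hmem_add_int hz n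
      have h1 : Ψ (z + ((n : ℤ) : ℂ) + 1) = Ψ (z + ((n : ℤ) : ℂ)) + 1 := hΨper _ hmem
      have h2 : z + (((n : ℤ) + 1 : ℤ) : ℂ) = z + ((n : ℤ) : ℂ) + 1 := by push_cast; ring
      rw [h2, h1, ih z hz]
      push_cast
      ring
    | pred n ih =>
      intro z hz
      have hmem : z + ((-(n : ℤ) - 1 : ℤ) : ℂ) ∈ Strip τ := hmem_add_int hz _
      have h1 := hΨper _ hmem
      have h2 : z + ((-(n : ℤ) - 1 : ℤ) : ℂ) + 1 = z + ((-(n : ℤ) : ℤ) : ℂ) := by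
        push_cast; ring
      rw [h2, ih z hz] at h1
      have hc : ((-(n : ℤ) - 1 : ℤ) : ℂ) = ((-(n : ℤ) : ℤ) : ℂ) - 1 := by push_cast; ring
      linear_combination (-1 : ℂ) * h1 - hc
  -- ### Periodicity of deriv Ψ
  have hderiv_per : ∀ z ∈ Strip τ, deriv Ψ (z + 1) = deriv Ψ z := by
    intro z hz
    have hev : (fun w => Ψ (w + 1)) =ᶠ[𝓝 z] fun w => Ψ w + 1 := by
      filter_upwards [hopen.mem_nhds hz] with w hw using hΨper w hw
    have h1 : deriv (fun w => Ψ (w + 1)) z = deriv Ψ (z + 1) := deriv_comp_add_const _ _ _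
    calc deriv Ψ (z + 1) = deriv (fun w => Ψ (w + 1)) z := h1.symm
      _ = deriv (fun w => Ψ w + 1) z := hev.deriv_eq
      _ = deriv Ψ z := deriv_add_const _
  have hderiv_int : ∀ (k : ℤ), ∀ z ∈ Strip τ, deriv Ψ (z + (k : ℂ)) = deriv Ψ z := by
    intro k
    induction k using Int.induction_on with
    | zero => intro z hz; simp
    | succ n ih =>
      intro z hz
      have hmem : z + ((n : ℤ) : ℂ) ∈ Strip τ := hmem_add_int hz n
      have h2 : z + (((n : ℤ) + 1 : ℤ) : ℂ) = z + ((n : ℤ) : ℂ) + 1 := by push_cast; ring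
      rw [h2, hderiv_per _ hmem, ih z hz]
    | pred n ih =>
      intro z hz
      have hmem : z + ((-(n : ℤ) - 1 : ℤ) : ℂ) ∈ Strip τ := hmem_add_int hz _
      have h1 := hderiv_per _ hmem
      have h2 : z + ((-(n : ℤ) - 1 : ℤ) : ℂ) + 1 = z + ((-(n : ℤ) : ℤ) : ℂ) := by
        push_cast; ring
      rw [h2, ih z hz] at h1
      exact h1.symm
  -- ### Intermediate strip levels
  set τA : ℝ := τ' + (τ - τ') / 3 with hτAdef
  set τB : ℝ := τ' + 2 * (τ - τ') / 3 with hτBdef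
  have hτ'A : τ' < τA := by rw [hτAdef]; linarith
  have hAB : τA < τB := by rw [hτAdef, hτBdef]; linarith
  have hBτ : τB < τ := by rw [hτBdef]; linarith
  have hB0 : 0 < τB := by rw [hτBdef]; linarith
  -- ### A compact fundamental domain
  set KB : Set ℂ := Set.Icc (-1 : ℝ) 2 ×ℂ Set.Icc (-τB) τB with hKBdef
  have hKBc : IsCompact KB := by
    apply Metric.isCompact_of_isClosed_isBounded
    · exact isClosed_Icc.reProdIm isClosed_Icc
    · exact (Metric.isBounded_Icc _ _).reProdIm (Metric.isBounded_Icc _ _)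
  have hKBsub : KB ⊆ Strip τ := by
    intro z hz
    rw [hKBdef, Complex.mem_reProdIm] at hz
    show |z.im| < τ
    rw [abs_lt]
    obtain ⟨-, h2⟩ := hz
    rw [Set.mem_Icc] at h2
    exact ⟨by linarith [h2.1], by linarith [h2.2]⟩
  have hKBne : KB.Nonempty := by
    refine ⟨0, ?_⟩
    rw [hKBdef, Complex.mem_reProdIm]
    refine ⟨?_, ?_⟩
    · rw [Complex.zero_re, Set.mem_Icc]; norm_num
    · rw [Complex.zero_im, Set.mem_Icc]; exact ⟨by linarith, by linarith⟩
  -- ### Bounds on the derivative of Ψ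
  have hnormcont : ContinuousOn (fun z => ‖deriv Ψ z‖) (Strip τ) := hderiv_cont.norm
  obtain ⟨zm, hzm, hzmin⟩ := hKBc.exists_isMinOn hKBne (hnormcont.mono hKBsub)
  obtain ⟨zM, hzM, hzmax⟩ := hKBc.exists_isMaxOn hKBne (hnormcont.mono hKBsub)
  set m : ℝ := ‖deriv Ψ zm‖ with hmdef
  set M : ℝ := ‖deriv Ψ zM‖ with hMdef
  have hm0 : 0 < m := by
    rw [hmdef, norm_pos_iff]
    exact deriv_ne_zero_of_injOn_aux hopen hΨdiff hΨinj (hKBsub hzm)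
  have hM0 : 0 < M := by
    rw [hMdef, norm_pos_iff]
    exact deriv_ne_zero_of_injOn_aux hopen hΨdiff hΨinj (hKBsub hzM)
  have habs_re : ∀ z w : ℂ, |z.re - w.re| ≤ ‖z - w‖ := by
    intro z w
    have := Complex.abs_re_le_norm (z - w)
    rwa [Complex.sub_re] at this
  have habs_im : ∀ z w : ℂ, |z.im - w.im| ≤ ‖z - w‖ := by
    intro z w
    have := Complex.abs_im_le_norm (z - w)
    rwa [Complex.sub_im] at this
  have hKBshift : ∀ (z : ℂ), |z.im| ≤ τB → 0 ≤ z.re - ⌊z.re⌋ → z.re - ⌊z.re⌋ < 1 →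
      z - ((⌊z.re⌋ : ℤ) : ℂ) ∈ KB := by
    intro z hz h0 h1
    rw [hKBdef, Complex.mem_reProdIm]
    constructor
    · simp only [Complex.sub_re, Complex.intCast_re, Set.mem_Icc]
      constructor <;> linarith
    · simp only [Complex.sub_im, Complex.intCast_im, sub_zero, Set.mem_Icc]
      rw [abs_le] at hz
      exact ⟨hz.1, hz.2⟩
  have hbounds : ∀ z : ℂ, |z.im| ≤ τB → m ≤ ‖deriv Ψ z‖ ∧ ‖deriv Ψ z‖ ≤ M := by
    intro z hz
    have h0 : (0:ℝ) ≤ z.re - ⌊z.re⌋ := sub_nonneg.2 (Int.floor_le _)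
    have h1 : z.re - ⌊z.re⌋ < 1 := by linarith [Int.lt_floor_add_one z.re]
    have hzk : z - ((⌊z.re⌋ : ℤ) : ℂ) ∈ KB := hKBshift z hz h0 h1
    have hmem : z - ((⌊z.re⌋ : ℤ) : ℂ) ∈ Strip τ := hKBsub hzk
    have heq : deriv Ψ z = deriv Ψ (z - ((⌊z.re⌋ : ℤ) : ℂ)) := by
      have := hderiv_int ⌊z.re⌋ (z - ((⌊z.re⌋ : ℤ) : ℂ)) hmem
      simpa using this
    rw [heq]
    exact ⟨isMinOn_iff.1 hzmin _ hzk, isMaxOn_iff.1 hzmax _ hzk⟩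
  -- ### Uniform continuity of deriv Ψ near the τA-substrip
  have hUCfull := hKBc.uniformContinuousOn_of_continuous (hderiv_cont.mono hKBsub)
  rw [Metric.uniformContinuousOn_iff] at hUCfull
  obtain ⟨δ, hδ0, hδ⟩ := hUCfull (m / 2) (by positivity)
  set r₀ : ℝ := min (min (δ / 2) 1) (τB - τA) with hr₀def
  have hr₀0 : 0 < r₀ := by
    rw [hr₀def]
    exact lt_min (lt_min (by linarith) one_pos) (by linarith)
  have hr₀δ : r₀ < δ := by
    have : r₀ ≤ δ / 2 := (min_le_left _ _).trans (min_le_left _ _)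
    linarith
  have hr₀1 : r₀ ≤ 1 := (min_le_left _ _).trans (min_le_right _ _)
  have hr₀BA : r₀ ≤ τB - τA := min_le_right _ _
  have hUC' : ∀ w z : ℂ, |w.im| ≤ τA → dist z w ≤ r₀ → ‖deriv Ψ z - deriv Ψ w‖ ≤ m / 2 := by
    intro w z hw hdist
    have hwB : |w.im| ≤ τB := by linarith [hAB.le]
    have hzB : |z.im| ≤ τB := by
      have h1 : |z.im - w.im| ≤ ‖z - w‖ := habs_im z w
      rw [dist_eq_norm] at hdist
      have := abs_sub_abs_le_abs_sub z.im w.im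
      have h2 : |z.im| ≤ |w.im| + |z.im - w.im| := by
        have := abs_sub_abs_le_abs_sub z.im w.im; linarith [abs_nonneg (z.im - w.im)]
      linarith
    set k : ℤ := ⌊w.re⌋ with hkdef
    have h0 : (0:ℝ) ≤ w.re - k := sub_nonneg.2 (Int.floor_le _)
    have h1 : w.re - k < 1 := by
      have := Int.lt_floor_add_one w.re
      rw [hkdef]; push_cast; linarith
    have hwk : w - (k : ℂ) ∈ KB := hKBshift w hwB h0 h1
    have hzk : z - (k : ℂ) ∈ KB := by
      rw [hKBdef, Complex.mem_reProdIm]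
      constructor
      · simp only [Complex.sub_re, Complex.intCast_re, Set.mem_Icc]
        have h2 : |z.re - w.re| ≤ ‖z - w‖ := habs_re z w
        rw [dist_eq_norm] at hdist
        rw [abs_le] at h2
        constructor <;> [linarith [hr₀1, h2.1]; linarith [hr₀1, h2.2]]
      · simp only [Complex.sub_im, Complex.intCast_im, sub_zero, Set.mem_Icc]
        rw [abs_le] at hzB
        exact hzB
    have hd2 : dist (z - (k : ℂ)) (w - (k : ℂ)) < δ := by
      have : dist (z - (k : ℂ)) (w - (k : ℂ)) = dist z w := by
        rw [dist_eq_norm, dist_eq_norm]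
        congr 1
        ring
      rw [this]
      linarith
    have hdd := hδ _ hzk _ hwk hd2
    have hz' : deriv Ψ (z - (k : ℂ)) = deriv Ψ z := by
      have := hderiv_int k (z - (k : ℂ)) (hKBsub hzk)
      simpa using this.symm
    have hw' : deriv Ψ (w - (k : ℂ)) = deriv Ψ w := by
      have := hderiv_int k (w - (k : ℂ)) (hKBsub hwk)
      simpa using this.symm
    rw [dist_eq_norm, hz', hw'] at hdd
    exact hdd.le
  -- ### Key local-inverse estimate
  have hpre : ∀ (u : ℂ), ‖u‖ ≤ m * r₀ / 8 → ∀ w : ℂ, |w.im| ≤ τA →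
      ∃ z : ℂ, ‖z - w‖ ≤ 8 / m * ‖u‖ ∧ |z.im| ≤ τB ∧ Ψ z = Ψ w + u := by
    intro u hu w hw
    by_cases hu0 : u = 0
    · refine ⟨w, ?_, by linarith [hAB.le], by simp [hu0]⟩
      simp [hu0]
    · have hunorm : 0 < ‖u‖ := norm_pos_iff.2 hu0
      set r : ℝ := 8 / m * ‖u‖ with hrdef
      have hr0 : 0 < r := by positivity
      have hrr₀ : r ≤ r₀ := by
        rw [hrdef]
        calc 8 / m * ‖u‖ ≤ 8 / m * (m * r₀ / 8) := by
              apply mul_le_mul_of_nonneg_left hu (by positivity)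
          _ = r₀ := by field_simp
      have hwS : w ∈ Strip τ := by
        show |w.im| < τ
        linarith
      have hcbB : ∀ z ∈ Metric.closedBall w r, |z.im| ≤ τB := by
        intro z hzc
        rw [Metric.mem_closedBall, dist_eq_norm] at hzc
        have h1 : |z.im - w.im| ≤ ‖z - w‖ := habs_im z w
        have h2 : |z.im| ≤ |w.im| + |z.im - w.im| := by
          have := abs_sub_abs_le_abs_sub z.im w.im
          linarith [abs_nonneg (z.im - w.im)]
        linarith
      have hcb_strip : Metric.closedBall w r ⊆ Strip τ := by
        intro z hzc
        show |z.im| < τ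
        linarith [hcbB z hzc]
      have hdiffcl : DiffContOnCl ℂ Ψ (Metric.ball w r) := by
        constructor
        · exact hΨdiff.mono ((Metric.ball_subset_closedBall).trans hcb_strip)
        · rw [closure_ball w hr0.ne']
          exact hΨcont.mono hcb_strip
      -- Taylor-type estimate on the closed ball
      have haux : ∀ z ∈ Metric.closedBall w r,
          ‖Ψ z - Ψ w - deriv Ψ w * (z - w)‖ ≤ m / 2 * ‖z - w‖ := by
        intro z hzc
        have hders : ∀ x ∈ Metric.closedBall w r,
            HasDerivWithinAt (fun y => Ψ y - deriv Ψ w * y)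
              (deriv Ψ x - deriv Ψ w) (Metric.closedBall w r) x := by
          intro x hx
          have hxs : x ∈ Strip τ := hcb_strip hx
          have hΨx : HasDerivAt Ψ (deriv Ψ x) x := (hΨdAt x hxs).hasDerivAt
          have hlin : HasDerivAt (fun y : ℂ => deriv Ψ w * y) (deriv Ψ w) x := by
            simpa using (hasDerivAt_id x).const_mul (deriv Ψ w)
          exact (hΨx.sub hlin).hasDerivWithinAt
        have hbound : ∀ x ∈ Metric.closedBall w r, ‖deriv Ψ x - deriv Ψ w‖ ≤ m / 2 := by
          intro x hx
          exact hUC' w x hw ((Metric.mem_closedBall.1 hx).trans hrr₀)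
        have := (convex_closedBall w r).norm_image_sub_le_of_norm_hasDerivWithin_le
          hders hbound (Metric.mem_closedBall_self hr0.le) hzc
        have he : (Ψ z - deriv Ψ w * z) - (Ψ w - deriv Ψ w * w)
            = Ψ z - Ψ w - deriv Ψ w * (z - w) := by ring
        rwa [he] at this
      -- Boundary lower bound
      have hsphere : ∀ z ∈ Metric.sphere w r, m / 2 * r ≤ ‖Ψ z - Ψ w‖ := by
        intro z hzs
        have hzc : z ∈ Metric.closedBall w r := Metric.sphere_subset_closedBall hzs
        have h1 := haux z hzc
        have h2 : ‖z - w‖ = r := by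
          rw [Metric.mem_sphere] at hzs
          rw [← dist_eq_norm]
          exact hzs
        have h3 : m ≤ ‖deriv Ψ w‖ := (hbounds w (by linarith [hAB.le])).1
        have h4 : ‖deriv Ψ w * (z - w)‖ = ‖deriv Ψ w‖ * r := by rw [norm_mul, h2]
        rw [h2] at h1
        have h5 : m * r ≤ ‖deriv Ψ w‖ * r := mul_le_mul_of_nonneg_right h3 hr0.le
        have h6 : ‖deriv Ψ w * (z - w)‖ ≤ ‖Ψ z - Ψ w‖ + ‖Ψ z - Ψ w - deriv Ψ w * (z - w)‖ := by
          have h7 := norm_sub_le (Ψ z - Ψ w) (Ψ z - Ψ w - deriv Ψ w * (z - w))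
          have h8 : Ψ z - Ψ w - (Ψ z - Ψ w - deriv Ψ w * (z - w)) = deriv Ψ w * (z - w) := by
            ring
          rw [h8] at h7
          exact h7
        rw [h4] at h6
        linarith
      have hfreq : ∃ᶠ z in 𝓝 w, Ψ z ≠ Ψ w := by
        have hev : ∀ᶠ z in 𝓝[≠] w, Ψ z ≠ Ψ w := by
          have hmem : ∀ᶠ z in 𝓝[≠] w, z ∈ Strip τ :=
            eventually_nhdsWithin_of_eventually_nhds (hopen.eventually_mem hwS)
          filter_upwards [hmem, self_mem_nhdsWithin] with z hz1 hz2
          intro he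
          exact hz2 (hΨinj hz1 hwS he)
        exact (hev.frequently).filter_mono nhdsWithin_le_nhds
      have himg := hdiffcl.ball_subset_image_closedBall hr0 hsphere hfreq
      have hmemball : Ψ w + u ∈ Metric.ball (Ψ w) (m / 2 * r / 2) := by
        rw [Metric.mem_ball, dist_eq_norm]
        have : Ψ w + u - Ψ w = u := by ring
        rw [this]
        have : m / 2 * r / 2 = 2 * ‖u‖ := by
          rw [hrdef]; field_simp; ring
        rw [this]
        linarith
      obtain ⟨z, hz_cb, hz_eq⟩ := himg hmemball
      refine ⟨z, ?_, hcbB z hz_cb, hz_eq⟩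
      rw [Metric.mem_closedBall, dist_eq_norm] at hz_cb
      exact hz_cb
  -- ### Iteration lemma
  set L : ℝ := 8 / m with hLdef
  have hL0 : 0 < L := by rw [hLdef]; positivity
  set δ₀ : ℝ := m * r₀ / 8 with hδ₀def
  have hδ₀0 : 0 < δ₀ := by rw [hδ₀def]; positivity
  have hiter : ∀ (s : ℝ), |s| ≤ δ₀ → ∀ (k : ℕ), ∀ z ∈ Strip τ',
      (k : ℝ) * L * |s| ≤ τA - τ' →
      ∃ ζ : ℂ, Ψ ζ = (fun y : ℂ => Fc y + (s : ℂ))^[k] (Ψ z)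
        ∧ ‖ζ - (z + (((k : ℝ) * θ : ℝ) : ℂ))‖ ≤ (k : ℝ) * L * |s| := by
    intro s hs k
    induction k with
    | zero =>
      intro z hz _
      refine ⟨z, by simp, ?_⟩
      simp
    | succ k ih =>
      intro z hz hk
      have hstep : (0:ℝ) ≤ L * |s| := by positivity
      have hk' : (k : ℝ) * L * |s| ≤ τA - τ' := by
        have hkk : (k : ℝ) ≤ (k + 1 : ℕ) := by push_cast; linarith
        have := mul_le_mul_of_nonneg_right (mul_le_mul_of_nonneg_right hkk (le_of_lt hL0))
          (abs_nonneg s)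
        push_cast at this ⊢
        push_cast at hk
        nlinarith [abs_nonneg s, hL0.le]
      obtain ⟨ζk, hζk_eq, hζk_b⟩ := ih z hz hk'
      have hzs : |z.im| < τ' := hz
      have him1 : (z + (((k : ℝ) * θ : ℝ) : ℂ)).im = z.im := him_add_real z _
      have hζkim : |ζk.im| < τA := by
        have h1 : |ζk.im - (z + (((k : ℝ) * θ : ℝ) : ℂ)).im| ≤ ‖ζk - (z + (((k : ℝ) * θ : ℝ) : ℂ))‖ :=
          habs_im _ _
        rw [him1] at h1
        have h2 : |ζk.im| ≤ |z.im| + |ζk.im - z.im| := by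
          have := abs_sub_abs_le_abs_sub ζk.im z.im
          linarith [abs_nonneg (ζk.im - z.im)]
        have h3 : (k:ℝ) * L * |s| ≤ τA - τ' := hk'
        linarith [hζk_b]
      set w : ℂ := ζk + ((θ : ℝ) : ℂ) with hwdef
      have hwim : |w.im| ≤ τA := by
        rw [hwdef]
        rw [him_add_real ζk θ]
        exact hζkim.le
      have hζkS : ζk ∈ Strip τ := by
        show |ζk.im| < τ
        linarith
      have hsnorm : ‖((s : ℝ) : ℂ)‖ ≤ m * r₀ / 8 := by
        rw [Complex.norm_real, Real.norm_eq_abs]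
        rw [hδ₀def] at hs
        exact hs
      obtain ⟨ζ, hζb, hζim, hζeq⟩ := hpre ((s : ℝ) : ℂ) hsnorm w hwim
      refine ⟨ζ, ?_, ?_⟩
      · rw [Function.iterate_succ_apply', ← hζk_eq, hFclin ζk hζkS]
        rw [hζeq, hwdef]
      · have he : ζ - (z + ((((k+1 : ℕ) : ℝ) * θ : ℝ) : ℂ))
            = (ζ - w) + (ζk - (z + (((k : ℝ) * θ : ℝ) : ℂ))) := by
          rw [hwdef]
          push_cast
          ring
        rw [he]
        have h2 : ‖ζ - w‖ ≤ L * |s| := by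
          rw [hLdef]
          have hns : ‖((s : ℝ) : ℂ)‖ = |s| := by rw [Complex.norm_real, Real.norm_eq_abs]
          rw [← hns]
          exact hζb
        calc ‖(ζ - w) + (ζk - (z + (((k : ℝ) * θ : ℝ) : ℂ)))‖
            ≤ ‖ζ - w‖ + ‖ζk - (z + (((k : ℝ) * θ : ℝ) : ℂ))‖ := norm_add_le _ _
          _ ≤ L * |s| + (k : ℝ) * L * |s| := add_le_add h2 hζk_b
          _ = ((k + 1 : ℕ) : ℝ) * L * |s| := by push_cast; ring
  -- ### Quantitative bounds along the sequence
  have hqcast : Tendsto (fun n => (qn n : ℝ)) atTop atTop :=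
    tendsto_natCast_atTop_atTop.comp hqtend
  have htend : ∀ c : ℝ, Tendsto (fun n => c / (qn n : ℝ)) atTop (𝓝 0) := fun c =>
    Tendsto.div_atTop tendsto_const_nhds hqcast
  have hq1 : ∀ n, (1 : ℝ) ≤ (qn n : ℝ) := by
    intro n
    exact_mod_cast hqpos n
  have htn : ∀ n, |t n| ≤ C₃ / (qn n : ℝ) ^ 2 := by
    intro n
    calc |t n| ≤ C₃ * |θ - (pn n : ℝ) / (qn n : ℝ)| := htbound n
      _ ≤ C₃ * (1 / (qn n : ℝ) ^ 2) := by
          apply mul_le_mul_of_nonneg_left (hconv n) hC₃.le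
      _ = C₃ / (qn n : ℝ) ^ 2 := by ring
  have htn' : ∀ n, |t n| ≤ C₃ / (qn n : ℝ) := by
    intro n
    refine (htn n).trans ?_
    have h1 := hq1 n
    have hq0 : (0:ℝ) < (qn n : ℝ) := by linarith
    rw [div_le_div_iff₀ (by positivity) hq0]
    have key : 0 ≤ C₃ * ((qn n : ℝ) * ((qn n : ℝ) - 1)) :=
      mul_nonneg hC₃.le (mul_nonneg hq0.le (by linarith))
    nlinarith [key]
  have hqL : ∀ n, (qn n : ℝ) * L * |t n| ≤ L * C₃ / (qn n : ℝ) := by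
    intro n
    have hq0 : (0:ℝ) < (qn n : ℝ) := by linarith [hq1 n]
    have h1 := htn n
    calc (qn n : ℝ) * L * |t n| ≤ (qn n : ℝ) * L * (C₃ / (qn n : ℝ) ^ 2) := by
          apply mul_le_mul_of_nonneg_left h1 (by positivity)
      _ = (qn n : ℝ) * L * C₃ / (qn n : ℝ) ^ 2 := by ring
      _ ≤ L * C₃ / (qn n : ℝ) := by
          rw [div_le_div_iff₀ (by positivity) hq0]
          have key : 0 ≤ L * C₃ * (qn n : ℝ) := by positivity
          nlinarith [key]
  -- a helper for bounding imaginary parts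
  have him_bound : ∀ (ζ z : ℂ) (c R : ℝ), ‖ζ - (z + (c : ℂ))‖ ≤ R → |ζ.im| ≤ |z.im| + R := by
    intro ζ z c R h
    have h1 : |ζ.im - z.im| ≤ ‖ζ - (z + (c : ℂ))‖ := by
      have := habs_im ζ (z + (c : ℂ))
      rwa [him_add_real z c] at this
    have h2 : |ζ.im| ≤ |z.im| + |ζ.im - z.im| := by
      have := abs_sub_abs_le_abs_sub ζ.im z.im
      linarith [abs_nonneg (ζ.im - z.im)]
    linarith
  -- eventual smallness
  have hEv1 : ∀ᶠ n in atTop, |t n| ≤ δ₀ := by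
    have h := Filter.Tendsto.eventually_le_const hδ₀0 (htend C₃)
    filter_upwards [h] with n hn
    exact (htn' n).trans hn
  have hEv2 : ∀ᶠ n in atTop, L * C₃ / (qn n : ℝ) ≤ τA - τ' := by
    have h := Filter.Tendsto.eventually_le_const (by linarith : (0:ℝ) < τA - τ')
      (htend (L * C₃))
    exact h
  refine ⟨?_, ?_⟩
  · -- Part 1: the iterates are defined on S' with values in the Herman strip
    obtain ⟨N, hN⟩ := Filter.eventually_atTop.1 (hEv1.and hEv2)
    refine ⟨N, ?_⟩
    intro n hn k hk
    obtain ⟨h1, h2⟩ := hN n hn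
    intro u hu
    obtain ⟨z, hz, rfl⟩ := hu
    have hzS : z ∈ Strip τ' := hz
    have hkq : (k : ℝ) * L * |t n| ≤ τA - τ' := by
      have hcast : (k : ℝ) ≤ (qn n : ℝ) := by exact_mod_cast hk
      calc (k : ℝ) * L * |t n| ≤ (qn n : ℝ) * L * |t n| := by
            apply mul_le_mul_of_nonneg_right
              (mul_le_mul_of_nonneg_right hcast hL0.le) (abs_nonneg (t n))
        _ ≤ L * C₃ / (qn n : ℝ) := hqL n
        _ ≤ τA - τ' := h2
    obtain ⟨ζ, hζeq, hζb⟩ := hiter (t n) h1 k z hzS hkq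
    have hζS : ζ ∈ Strip τ := by
      show |ζ.im| < τ
      have h3 := him_bound ζ z ((k : ℝ) * θ) ((k : ℝ) * L * |t n|) hζb
      have hzim : |z.im| < τ' := hz
      linarith
    exact ⟨ζ, hζS, hζeq⟩
  · -- Part 2: uniform convergence of G_n to 0 on S'
    rw [Metric.tendstoUniformlyOn_iff]
    intro ε hε
    have hEv3 : ∀ᶠ n in atTop, M * (L * C₃ / (qn n : ℝ) + 1 / (qn n : ℝ)) < ε := by
      have h := Filter.Tendsto.eventually_lt_const hε (htend (M * (L * C₃) + M))
      filter_upwards [h] with n hn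
      have hq0 : (0:ℝ) < (qn n : ℝ) := by linarith [hq1 n]
      have heq : M * (L * C₃ / (qn n : ℝ) + 1 / (qn n : ℝ))
          = (M * (L * C₃) + M) / (qn n : ℝ) := by
        field_simp
      rw [heq]
      exact hn
    filter_upwards [hEv1, hEv2, hEv3] with n h1 h2 h3
    intro u hu
    obtain ⟨z, hz, rfl⟩ := hu
    have hzS : z ∈ Strip τ' := hz
    have hkq : (qn n : ℝ) * L * |t n| ≤ τA - τ' := (hqL n).trans h2
    obtain ⟨ζ, hζeq, hζb⟩ := hiter (t n) h1 (qn n) z hzS hkq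
    set w' : ℂ := ζ - ((pn n : ℤ) : ℂ) with hw'def
    have hζim : |ζ.im| ≤ τA := by
      have h4 := him_bound ζ z ((qn n : ℝ) * θ) ((qn n : ℝ) * L * |t n|) hζb
      have hzim : |z.im| < τ' := hz
      linarith
    have hw'im : w'.im = ζ.im := by rw [hw'def]; simp
    have hw'S : w' ∈ Strip τ := by
      show |w'.im| < τ
      rw [hw'im]
      linarith
    have hΨw' : Ψ ζ = Ψ w' + ((pn n : ℤ) : ℂ) := by
      have h4 := hΨint (pn n) w' hw'S
      have h5 : w' + ((pn n : ℤ) : ℂ) = ζ := by rw [hw'def]; ring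
      rw [h5] at h4
      exact h4
    have hval : (fun y : ℂ => Fc y + ((t n : ℝ) : ℂ))^[qn n] (Ψ z) - Ψ z - ((pn n : ℤ) : ℂ)
        = Ψ w' - Ψ z := by
      rw [← hζeq, hΨw']
      ring
    have hq0 : (0:ℝ) < (qn n : ℝ) := by linarith [hq1 n]
    have hsecond : ‖(((qn n : ℝ) * θ - (pn n : ℝ) : ℝ) : ℂ)‖ ≤ 1 / (qn n : ℝ) := by
      rw [Complex.norm_real, Real.norm_eq_abs]
      have h6 : (qn n : ℝ) * θ - (pn n : ℝ) = (qn n : ℝ) * (θ - (pn n : ℝ) / (qn n : ℝ)) := by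
        field_simp
      rw [h6, abs_mul, abs_of_pos hq0]
      calc (qn n : ℝ) * |θ - (pn n : ℝ) / (qn n : ℝ)|
          ≤ (qn n : ℝ) * (1 / (qn n : ℝ) ^ 2) :=
            mul_le_mul_of_nonneg_left (hconv n) hq0.le
        _ = 1 / (qn n : ℝ) := by field_simp
    have hw'z : ‖w' - z‖ ≤ L * C₃ / (qn n : ℝ) + 1 / (qn n : ℝ) := by
      have hdecomp : w' - z = (ζ - (z + (((qn n : ℝ) * θ : ℝ) : ℂ)))
          + ((((qn n : ℝ) * θ - (pn n : ℝ) : ℝ)) : ℂ) := by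
        rw [hw'def]
        push_cast
        ring
      rw [hdecomp]
      have h8 := norm_add_le (ζ - (z + (((qn n : ℝ) * θ : ℝ) : ℂ)))
        ((((qn n : ℝ) * θ - (pn n : ℝ) : ℝ)) : ℂ)
      have h7 : ‖ζ - (z + (((qn n : ℝ) * θ : ℝ) : ℂ))‖ ≤ L * C₃ / (qn n : ℝ) :=
        hζb.trans (hqL n)
      linarith [hsecond]
    have hMVT : ‖Ψ w' - Ψ z‖ ≤ M * ‖w' - z‖ := by
      have hconvB : Convex ℝ {y : ℂ | |y.im| ≤ τB} := by
        have hset : {y : ℂ | |y.im| ≤ τB} = Complex.imLm ⁻¹' (Set.Icc (-τB) τB) := by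
          ext y
          simp only [Set.mem_setOf_eq, Set.mem_preimage, Complex.imLm, Set.mem_Icc,
            LinearMap.coe_mk, AddHom.coe_mk]
          exact abs_le
        rw [hset]
        exact (convex_Icc _ _).linear_preimage _
      apply hconvB.norm_image_sub_le_of_norm_deriv_le
      · intro y hy
        apply hΨdAt
        show |y.im| < τ
        exact lt_of_le_of_lt hy hBτ
      · intro y hy
        exact (hbounds y hy).2
      · show |z.im| ≤ τB
        have h9 : |z.im| < τ' := hz
        linarith
      · show |w'.im| ≤ τB
        rw [hw'im]
        linarith
    have hfinal : ‖Ψ w' - Ψ z‖ < ε := by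
      have h10 := hMVT.trans (mul_le_mul_of_nonneg_left hw'z hM0.le)
      linarith [h3]
    have hdist : dist ((fun _ : ℂ => (0:ℂ)) (Ψ z))
        ((fun y : ℂ => Fc y + ((t n : ℝ) : ℂ))^[qn n] (Ψ z) - Ψ z - ((pn n : ℤ) : ℂ))
        = ‖Ψ w' - Ψ z‖ := by
      rw [hval]
      simp only
      rw [dist_comm, dist_zero_right]
    rw [hdist]
    exact hfinal
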